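/- Let ε ∈ (0,1), let m ≥ 2 be an integer, let f : {0,1}^n → {0,1} be a Boolean function, and let χ = {g_1, …, g_l} be a linear characteristic of f over Z_m. Then there exist t ≤ ⌈(2/ε)·ln(2m)⌉ and integers k_1, …, k_t such that the function P(σ) = (1/t)·Σ_{i=1}^t Π_{j=1}^l cos²(π k_i g_j(σ) / m) satisfies: P(σ) = 1 for every σ with f(σ) = 1, and P(σ) ≤ 1/2 + √ε/2 for every σ with f(σ) = 0. (P(σ) is the acceptance probability of the generalized quantum fingerprinting read-once branching program for f.) -/

import Mathlib

open Real Finset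

lemma exp_mul_le_cosh_add (lam x : ℝ) (hx1 : -1 ≤ x) (hx2 : x ≤ 1) :
    Real.exp (lam * x) ≤ Real.cosh lam + x * Real.sinh lam := by
  have ha : (0:ℝ) ≤ (1 + x) / 2 := by linarith
  have hb : (0:ℝ) ≤ (1 - x) / 2 := by linarith
  have hab : (1 + x) / 2 + (1 - x) / 2 = 1 := by ring
  have := convexOn_exp.2 (Set.mem_univ lam) (Set.mem_univ (-lam)) ha hb hab
  simp only [smul_eq_mul] at this
  have h2 : (1+x)/2 * lam + (1-x)/2 * (-lam) = lam * x := by ring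
  rw [h2] at this
  calc Real.exp (lam * x) ≤ (1+x)/2 * Real.exp lam + (1-x)/2 * Real.exp (-lam) := this
    _ = Real.cosh lam + x * Real.sinh lam := by rw [Real.cosh_eq, Real.sinh_eq]; ring

lemma sum_cos_eq_zero (m : ℕ) (hm : 0 < m) (b : ℤ) (hb : ¬ (m:ℤ) ∣ b) :
    ∑ k ∈ Finset.range m, Real.cos (2 * Real.pi * k * b / m) = 0 := by
  have hm0 : (m:ℝ) ≠ 0 := Nat.cast_ne_zero.mpr hm.ne'
  have hm0' : (m:ℂ) ≠ 0 := by exact_mod_cast hm0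
  set ζ : ℂ := Complex.exp (2 * Real.pi * Complex.I * b / m) with hζ
  have hζm : ζ ^ m = 1 := by
    rw [hζ, ← Complex.exp_nat_mul, Complex.exp_eq_one_iff]
    refine ⟨b, ?_⟩
    field_simp
  have hζ1 : ζ ≠ 1 := by
    rw [hζ, Ne, Complex.exp_eq_one_iff]
    rintro ⟨c, hc⟩
    apply hb
    have h2 : (2:ℂ) * Real.pi * Complex.I ≠ 0 := by
      simp [Complex.I_ne_zero, Real.pi_ne_zero, Complex.ofReal_ne_zero]
    rw [div_eq_iff hm0'] at hc
    have hbc : (b:ℂ) = c * m := by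
      apply mul_left_cancel₀ h2
      linear_combination hc
    refine ⟨c, ?_⟩
    have : b = c * m := by exact_mod_cast hbc
    rw [this]; ring
  have hsum : ∑ k ∈ Finset.range m, ζ ^ k = 0 := by
    have := geom_sum_eq hζ1 m
    rw [this, hζm]
    simp
  have hre : ∀ k : ℕ, (ζ ^ k).re = Real.cos (2 * Real.pi * k * b / m) := by
    intro k
    rw [hζ, ← Complex.exp_nat_mul]
    have : (k:ℂ) * (2 * Real.pi * Complex.I * b / m)
        = ((2 * Real.pi * k * b / m : ℝ) : ℂ) * Complex.I := by
      push_cast; field_simp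
    rw [this, Complex.exp_ofReal_mul_I_re]
  calc ∑ k ∈ Finset.range m, Real.cos (2 * Real.pi * k * b / m)
      = ∑ k ∈ Finset.range m, (ζ ^ k).re := by simp [hre]
    _ = (∑ k ∈ Finset.range m, ζ ^ k).re := by rw [Complex.re_sum]
    _ = 0 := by rw [hsum]; simp

lemma exists_good_K (m t : ℕ) (hm : 2 ≤ m) (ht : 0 < t) (ε : ℝ) (hε0 : 0 < ε) (hε1 : ε < 1)
    (hht : Real.log (2 * m) ≤ t * ε / 2) :
    ∃ K : Fin t → Fin m, ∀ b : ℕ, 0 < b → b < m →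
      ∑ i, Real.cos (2 * Real.pi * (K i) * b / m) ≤ t * Real.sqrt ε := by
  have hm0 : (0:ℝ) < m := by positivity
  set lam := Real.sqrt ε with hlam
  have hlam0 : 0 < lam := Real.sqrt_pos.mpr hε0
  have hlamsq : lam ^ 2 = ε := Real.sq_sqrt hε0.le
  set w : ℕ → Fin m → ℝ := fun b k => Real.exp (lam * Real.cos (2 * Real.pi * k * b / m)) with hw
  -- Step A
  have hA : ∀ b : ℕ, 0 < b → b < m → ∑ k : Fin m, w b k ≤ m * Real.exp (ε / 2) := by
    intro b hb0 hbm
    have hdvd : ¬ (m:ℤ) ∣ (b:ℤ) := by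
      intro h
      have := Int.le_of_dvd (by exact_mod_cast hb0) h
      omega
    have hcos0 : ∑ k : Fin m, Real.cos (2 * Real.pi * k * b / m) = 0 := by
      rw [Fin.sum_univ_eq_sum_range (fun k : ℕ => Real.cos (2 * Real.pi * k * b / m)) m]
      have := sum_cos_eq_zero m (by omega) b hdvd
      rw [← this]
      apply Finset.sum_congr rfl
      intro k _
      push_cast
      ring_nf
    calc ∑ k : Fin m, w b k
        ≤ ∑ k : Fin m, (Real.cosh lam + Real.cos (2 * Real.pi * k * b / m) * Real.sinh lam) := by
          apply Finset.sum_le_sum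
          intro k _
          exact exp_mul_le_cosh_add lam _ (Real.neg_one_le_cos _) (Real.cos_le_one _)
      _ = m * Real.cosh lam + (∑ k : Fin m, Real.cos (2 * Real.pi * k * b / m)) * Real.sinh lam := by
          rw [Finset.sum_add_distrib, ← Finset.sum_mul]
          simp [Finset.card_univ]
      _ = m * Real.cosh lam := by rw [hcos0]; ring
      _ ≤ m * Real.exp (ε / 2) := by
          have := Real.cosh_le_exp_half_sq lam
          rw [hlamsq] at this
          exact mul_le_mul_of_nonneg_left this hm0.le
  -- Step B
  have hB : ∀ b : ℕ, ∑ K : Fin t → Fin m, ∏ i, w b (K i) = (∑ k : Fin m, w b k) ^ t := by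
    intro b
    rw [Fintype.sum_pow]
  -- counting
  by_contra hcon
  push_neg at hcon
  -- every K has a bad b
  have hbadsum : ∀ K : Fin t → Fin m, (1:ℝ) ≤ ∑ b ∈ Finset.Ioo 0 m,
      Real.exp (-(t * ε)) * ∏ i, w b (K i) := by
    intro K
    obtain ⟨b, hb0, hbm, hbad⟩ := hcon K
    have hone : (1:ℝ) ≤ Real.exp (-(t*ε)) * ∏ i, w b (K i) := by
      have hprod : ∏ i, w b (K i) = Real.exp (lam * ∑ i, Real.cos (2 * Real.pi * (K i) * b / m)) := by
        rw [Finset.mul_sum, Real.exp_sum]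
      rw [hprod, ← Real.exp_add]
      apply Real.one_le_exp
      have hS : (t:ℝ) * ε ≤ lam * ∑ i, Real.cos (2 * Real.pi * (K i) * b / m) := by
        nlinarith [hbad, hlam0, hlamsq]
      linarith
    calc (1:ℝ) ≤ Real.exp (-(t*ε)) * ∏ i, w b (K i) := hone
      _ ≤ ∑ b' ∈ Finset.Ioo 0 m, Real.exp (-(t*ε)) * ∏ i, w b' (K i) := by
          apply Finset.single_le_sum (f := fun b' => Real.exp (-(t*ε)) * ∏ i, w b' (K i))
          · intro b' _
            positivity
          · exact Finset.mem_Ioo.mpr ⟨hb0, hbm⟩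
  have hwnn : ∀ b : ℕ, (0:ℝ) ≤ ∑ k : Fin m, w b k := by
    intro b; apply Finset.sum_nonneg; intro k _; positivity
  have h1 : ((m:ℝ))^t ≤ ∑ K : Fin t → Fin m, ∑ b ∈ Finset.Ioo 0 m,
      Real.exp (-(t * ε)) * ∏ i, w b (K i) := by
    have hcard : (Finset.univ : Finset (Fin t → Fin m)).card = m ^ t := by
      simp [Finset.card_univ]
    calc ((m:ℝ))^t = ∑ _K : Fin t → Fin m, (1:ℝ) := by
          rw [Finset.sum_const, hcard]; push_cast; ring
      _ ≤ _ := Finset.sum_le_sum fun K _ => hbadsum K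
  have h2 : ∑ K : Fin t → Fin m, ∑ b ∈ Finset.Ioo 0 m,
      Real.exp (-(t * ε)) * ∏ i, w b (K i)
      = ∑ b ∈ Finset.Ioo 0 m, Real.exp (-(t * ε)) * (∑ k : Fin m, w b k) ^ t := by
    rw [Finset.sum_comm]
    apply Finset.sum_congr rfl
    intro b _
    rw [← Finset.mul_sum, hB b]
  have h3 : ∑ b ∈ Finset.Ioo 0 m, Real.exp (-(t * ε)) * (∑ k : Fin m, w b k) ^ t
      ≤ (m - 1 : ℝ) * (Real.exp (-(t * ε)) * ((m:ℝ) * Real.exp (ε / 2)) ^ t) := by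
    have hcard : (Finset.Ioo 0 m).card = m - 1 := by simp
    calc ∑ b ∈ Finset.Ioo 0 m, Real.exp (-(t * ε)) * (∑ k : Fin m, w b k) ^ t
        ≤ ∑ _b ∈ Finset.Ioo 0 m, Real.exp (-(t * ε)) * ((m:ℝ) * Real.exp (ε / 2)) ^ t := by
          apply Finset.sum_le_sum
          intro b hbmem
          obtain ⟨hb0, hbm⟩ := Finset.mem_Ioo.mp hbmem
          apply mul_le_mul_of_nonneg_left _ (Real.exp_nonneg _)
          exact pow_le_pow_left₀ (hwnn b) (hA b hb0 hbm) t
      _ = (m - 1 : ℝ) * (Real.exp (-(t * ε)) * ((m:ℝ) * Real.exp (ε / 2)) ^ t) := by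
          rw [Finset.sum_const, hcard, nsmul_eq_mul]
          congr 1
          have : (1:ℕ) ≤ m := by omega
          push_cast [this]
          ring
  have hexp : Real.exp (-(t * ε / 2)) ≤ 1 / (2 * m) := by
    have h2m : (0:ℝ) < 2 * m := by positivity
    have := Real.exp_le_exp.mpr hht
    rw [Real.exp_log h2m] at this
    rw [Real.exp_neg, inv_eq_one_div]
    exact one_div_le_one_div_of_le h2m this
  have hfinal : (m - 1 : ℝ) * (Real.exp (-(t * ε)) * ((m:ℝ) * Real.exp (ε / 2)) ^ t)
      < (m:ℝ)^t := by
    have hrw : Real.exp (-(t * ε)) * ((m:ℝ) * Real.exp (ε / 2)) ^ t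
        = (m:ℝ)^t * Real.exp (-(t * ε / 2)) := by
      rw [mul_pow, ← Real.exp_nat_mul]
      rw [show Real.exp (-(↑t*ε)) * ((m:ℝ)^t * Real.exp (↑t*(ε/2)))
          = (m:ℝ)^t * (Real.exp (-(↑t*ε)) * Real.exp (↑t*(ε/2))) from by ring,
        ← Real.exp_add]
      congr 1
      ring
    rw [hrw]
    have hmpow : (0:ℝ) < (m:ℝ)^t := by positivity
    have hm1 : (0:ℝ) ≤ (m:ℝ) - 1 := by
      have : (2:ℝ) ≤ m := by exact_mod_cast hm
      linarith
    calc (m - 1 : ℝ) * ((m:ℝ)^t * Real.exp (-(t * ε / 2)))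
        ≤ (m - 1 : ℝ) * ((m:ℝ)^t * (1 / (2 * m))) := by
          apply mul_le_mul_of_nonneg_left _ hm1
          exact mul_le_mul_of_nonneg_left hexp hmpow.le
      _ < (m:ℝ)^t := by
          have : (2:ℝ) ≤ m := by exact_mod_cast hm
          rw [div_eq_mul_inv]
          have h2m : (0:ℝ) < 2 * m := by positivity
          rw [mul_comm ((m:ℝ)^t)]
          rw [← mul_assoc]
          have hlt : (m - 1 : ℝ) * (1 * (2 * (m:ℝ))⁻¹) < 1 := by
            rw [one_mul, mul_inv_lt_iff₀ h2m]
            linarith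
          nlinarith [hmpow]
  linarith [h1, h2 ▸ h1, h3]


/-- The value of the linear polynomial `g(x) = c₀ + c₁x₁ + … + cₙxₙ` at a Boolean input. -/
def linEval {n : ℕ} (c0 : ℤ) (c : Fin n → ℤ) (σ : Fin n → Bool) : ℤ :=
  c0 + ∑ i, c i * (if σ i then 1 else 0)

/-- If a Boolean function `f` has a linear characteristic `χ = {g₁, …, g_l}` over `ℤ_m`
(each `g_j` linear, and `f(σ) = 1` iff all `g_j(σ) ≡ 0 (mod m)`), then the generalized
quantum fingerprinting program accepts every `σ ∈ f⁻¹(1)` with probability `1` and every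
`σ ∈ f⁻¹(0)` with probability `≤ 1/2 + √ε/2`, using `t ≤ ⌈(2/ε)·ln(2m)⌉` parameters. -/
theorem linear_characteristic_fingerprinting (n l : ℕ) (ε : ℝ) (hε0 : 0 < ε)
    (hε1 : ε < 1) (m : ℕ) (hm : 2 ≤ m) (f : (Fin n → Bool) → Bool)
    (c0 : Fin l → ℤ) (c : Fin l → Fin n → ℤ)
    (hchar : ∀ σ : Fin n → Bool,
      f σ = true ↔ ∀ j : Fin l, (m : ℤ) ∣ linEval (c0 j) (c j) σ) :
    ∃ t : ℕ, 0 < t ∧ t ≤ ⌈(2 / ε) * Real.log (2 * (m : ℝ))⌉₊ ∧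
      ∃ k : Fin t → ℤ,
        ∀ σ : Fin n → Bool,
          (f σ = true →
            (1 / (t : ℝ)) *
              ∑ i, ∏ j, (Real.cos (Real.pi * (k i : ℝ) *
                ((linEval (c0 j) (c j) σ : ℤ) : ℝ) / (m : ℝ))) ^ 2 = 1) ∧
          (f σ = false →
            (1 / (t : ℝ)) *
              ∑ i, ∏ j, (Real.cos (Real.pi * (k i : ℝ) *
                ((linEval (c0 j) (c j) σ : ℤ) : ℝ) / (m : ℝ))) ^ 2
              ≤ 1 / 2 + Real.sqrt ε / 2) := by
  have hm0 : (0:ℝ) < m := by positivity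
  have hmne : (m:ℝ) ≠ 0 := hm0.ne'
  have hlog : 0 < Real.log (2 * m) := by
    apply Real.log_pos
    have : (2:ℝ) ≤ m := by exact_mod_cast hm
    linarith
  set T := ⌈(2 / ε) * Real.log (2 * (m : ℝ))⌉₊ with hT
  have hTpos : 0 < T := by
    apply Nat.ceil_pos.mpr
    positivity
  have hht : Real.log (2 * m) ≤ T * ε / 2 := by
    have hle : (2 / ε) * Real.log (2 * m) ≤ T := Nat.le_ceil _
    have h2 : Real.log (2 * m) = ((2 / ε) * Real.log (2 * m)) * (ε / 2) := by
      field_simp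
    rw [h2]
    have : (0:ℝ) < ε / 2 := by linarith
    calc ((2 / ε) * Real.log (2 * m)) * (ε / 2) ≤ (T:ℝ) * (ε / 2) :=
          mul_le_mul_of_nonneg_right hle this.le
      _ = T * ε / 2 := by ring
  obtain ⟨K, hK⟩ := exists_good_K m T hm hTpos ε hε0 hε1 hht
  refine ⟨T, hTpos, le_refl _, fun i => ((K i : ℕ) : ℤ), fun σ => ⟨?_, ?_⟩⟩
  · -- true case
    intro hf
    have hdvd := (hchar σ).mp hf
    have hterm : ∀ i : Fin T, ∏ j, (Real.cos (Real.pi * (((K i : ℕ):ℤ) : ℝ) *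
        ((linEval (c0 j) (c j) σ : ℤ) : ℝ) / (m : ℝ))) ^ 2 = 1 := by
      intro i
      apply Finset.prod_eq_one
      intro j _
      obtain ⟨d, hd⟩ := hdvd j
      have hangle : Real.pi * (((K i : ℕ):ℤ) : ℝ) * ((linEval (c0 j) (c j) σ : ℤ) : ℝ) / (m : ℝ)
          = ((((K i : ℕ):ℤ) * d : ℤ) : ℝ) * Real.pi := by
        rw [hd]
        push_cast
        field_simp
      rw [hangle, Real.cos_sq]
      rw [show 2 * (((((K i : ℕ):ℤ) * d : ℤ) : ℝ) * Real.pi)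
          = ((((K i : ℕ):ℤ) * d : ℤ) : ℝ) * (2 * Real.pi) from by ring]
      rw [Real.cos_int_mul_two_pi]
      norm_num
    rw [Finset.sum_congr rfl (fun i _ => hterm i), Finset.sum_const]
    simp only [Finset.card_univ, Fintype.card_fin, nsmul_eq_mul, mul_one]
    rw [one_div_mul_eq_div, div_self]
    exact_mod_cast hTpos.ne'
  · -- false case
    intro hf
    have hnd : ¬ ∀ j : Fin l, (m : ℤ) ∣ linEval (c0 j) (c j) σ := by
      intro h
      rw [(hchar σ).mpr h] at hf
      exact absurd hf (by simp)
    push_neg at hnd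
    obtain ⟨j₀, hj₀⟩ := hnd
    set g : ℤ := linEval (c0 j₀) (c j₀) σ with hg
    set b : ℕ := (g % m).toNat with hb
    have hmZ : (0:ℤ) < m := by exact_mod_cast Nat.lt_of_lt_of_le Nat.zero_lt_two hm
    have hbZ : (b:ℤ) = g % m := Int.toNat_of_nonneg (Int.emod_nonneg g hmZ.ne')
    have hb0 : 0 < b := by
      rcases Nat.eq_zero_or_pos b with h0 | h
      · exfalso
        apply hj₀
        have : g % m = 0 := by rw [← hbZ, h0]; simp
        exact Int.dvd_of_emod_eq_zero this
      · exact h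
    have hbm : b < m := by
      have := Int.emod_lt_of_pos g hmZ
      omega
    -- pointwise bound for each i
    have hptwise : ∀ i : Fin T, ∏ j, (Real.cos (Real.pi * (((K i : ℕ):ℤ) : ℝ) *
        ((linEval (c0 j) (c j) σ : ℤ) : ℝ) / (m : ℝ))) ^ 2
        ≤ 1/2 + Real.cos (2 * Real.pi * ((K i : ℕ):ℝ) * (b:ℝ) / m) / 2 := by
      intro i
      set a : Fin l → ℝ := fun j => (Real.cos (Real.pi * (((K i : ℕ):ℤ) : ℝ) *
        ((linEval (c0 j) (c j) σ : ℤ) : ℝ) / (m : ℝ))) ^ 2 with ha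
      have h1 : ∏ j, a j ≤ a j₀ := by
        rw [← Finset.mul_prod_erase Finset.univ a (Finset.mem_univ j₀)]
        apply mul_le_of_le_one_right (by positivity)
        apply Finset.prod_le_one
        · intro j _; positivity
        · intro j _
          exact Real.cos_sq_le_one _
      have h2 : a j₀ = 1/2 + Real.cos (2 * Real.pi * ((K i : ℕ):ℝ) * (b:ℝ) / m) / 2 := by
        rw [ha]
        simp only [← hg]
        rw [Real.cos_sq]
        congr 2
        have hq : g = m * (g / m) + (b:ℤ) := by
          rw [hbZ]; rw [Int.mul_ediv_add_emod]
        have hangle : 2 * (Real.pi * (((K i : ℕ):ℤ) : ℝ) * (g : ℝ) / (m : ℝ))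
            = 2 * Real.pi * ((K i : ℕ):ℝ) * (b:ℝ) / m
              + ((((K i : ℕ):ℤ) * (g / m) : ℤ):ℝ) * (2 * Real.pi) := by
          rw [show (g:ℝ) = (m:ℝ) * ((g / m : ℤ):ℝ) + (b:ℝ) from by exact_mod_cast congrArg (Int.cast : ℤ → ℝ) hq]
          push_cast
          field_simp
          ring
        rw [hangle, Real.cos_add_int_mul_two_pi]
      linarith [h1, h2.ge, h2.le]
    -- sum up
    have hsum : ∑ i : Fin T, ∏ j, (Real.cos (Real.pi * (((K i : ℕ):ℤ) : ℝ) *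
        ((linEval (c0 j) (c j) σ : ℤ) : ℝ) / (m : ℝ))) ^ 2
        ≤ (T:ℝ)/2 + ((T:ℝ) * Real.sqrt ε)/2 := by
      calc ∑ i : Fin T, ∏ j, (Real.cos (Real.pi * (((K i : ℕ):ℤ) : ℝ) *
          ((linEval (c0 j) (c j) σ : ℤ) : ℝ) / (m : ℝ))) ^ 2
          ≤ ∑ i : Fin T, (1/2 + Real.cos (2 * Real.pi * ((K i : ℕ):ℝ) * (b:ℝ) / m) / 2) :=
            Finset.sum_le_sum fun i _ => hptwise i
        _ = (T:ℝ)/2 + (∑ i : Fin T, Real.cos (2 * Real.pi * ((K i : ℕ):ℝ) * (b:ℝ) / m))/2 := by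
            rw [Finset.sum_add_distrib, Finset.sum_const, ← Finset.sum_div]
            simp [Finset.card_univ]
            ring
        _ ≤ (T:ℝ)/2 + ((T:ℝ) * Real.sqrt ε)/2 := by
            have := hK b hb0 hbm
            linarith
    have hTR : (0:ℝ) < T := by exact_mod_cast hTpos
    calc (1 / (T : ℝ)) * ∑ i : Fin T, ∏ j, (Real.cos (Real.pi * (((K i : ℕ):ℤ) : ℝ) *
        ((linEval (c0 j) (c j) σ : ℤ) : ℝ) / (m : ℝ))) ^ 2
        ≤ (1 / (T : ℝ)) * ((T:ℝ)/2 + ((T:ℝ) * Real.sqrt ε)/2) := by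
          apply mul_le_mul_of_nonneg_left hsum (by positivity)
      _ = 1/2 + Real.sqrt ε / 2 := by field_simp
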